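/- Let C₁, C₂, C₃, C₄ be positive reals and define Δ_SAM(γ, B) = C₁(1 - e^{-C₂(1-γ)})² / ((1-γ)³ B) + C₃(1 - e^{-C₄/(1-γ)}) / ((1-γ) B) for momentum γ ∈ [0,1) and batch size B > 0. Then Δ_SAM is strictly increasing in γ for each fixed B > 0, and strictly decreasing in B for each fixed γ ∈ [0,1). -/

import Mathlib

lemma g_strictAnti : StrictAntiOn (fun x : ℝ => (1 - Real.exp (-x)) / x) (Set.Ioi 0) := by
  apply strictAntiOn_of_deriv_neg (convex_Ioi 0)
  · apply ContinuousOn.div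
    · exact (continuous_const.sub (Real.continuous_exp.comp continuous_neg)).continuousOn
    · exact continuousOn_id
    · intro x hx; exact ne_of_gt hx
  · intro x hx
    rw [interior_Ioi] at hx
    have hx0 : (0:ℝ) < x := hx
    have h1 : HasDerivAt (fun x : ℝ => 1 - Real.exp (-x)) (Real.exp (-x)) x := by
      have h := ((hasDerivAt_neg x).exp)
      simpa using h.const_sub (1:ℝ)
    have h2 : HasDerivAt (fun x : ℝ => (1 - Real.exp (-x)) / x)
        ((Real.exp (-x) * x - (1 - Real.exp (-x)) * 1) / x ^ 2) x :=
      h1.div (hasDerivAt_id x) (ne_of_gt hx0)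
    rw [h2.deriv]
    apply div_neg_of_neg_of_pos
    · have hlt : x + 1 < Real.exp x := Real.add_one_lt_exp (ne_of_gt hx0)
      have hmul : Real.exp (-x) * Real.exp x = 1 := by
        rw [← Real.exp_add]; simp
      have hpos : 0 < Real.exp (-x) := Real.exp_pos _
      nlinarith [mul_lt_mul_of_pos_left hlt hpos]
    · positivity

lemma key1 (C : ℝ) (hC : 0 < C) {a b : ℝ} (ha : 0 < a) (hab : a < b) :
    (1 - Real.exp (-(C * b))) ^ 2 / b ^ 3 < (1 - Real.exp (-(C * a))) ^ 2 / a ^ 3 := by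
  have hb : 0 < b := ha.trans hab
  have hca : (0:ℝ) < C * a := mul_pos hC ha
  have hcb : (0:ℝ) < C * b := mul_pos hC hb
  have hg := g_strictAnti hca hcb (by nlinarith)
  simp only at hg
  set p := 1 - Real.exp (-(C * a)) with hp'
  set q := 1 - Real.exp (-(C * b)) with hq'
  have hp : 0 < p := by
    have : Real.exp (-(C * a)) < 1 := Real.exp_lt_one_iff.mpr (by linarith)
    linarith
  have hq : 0 < q := by
    have : Real.exp (-(C * b)) < 1 := Real.exp_lt_one_iff.mpr (by linarith)
    linarith
  -- from hg : q / (C*b) < p / (C*a)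
  have h : q * a < p * b := by
    rw [div_lt_div_iff₀ hcb hca] at hg
    nlinarith
  have h2 : (q * a) * (q * a) < (p * b) * (p * b) :=
    mul_self_lt_mul_self (le_of_lt (mul_pos hq ha)) h
  rw [div_lt_div_iff₀ (by positivity) (by positivity)]
  nlinarith [mul_lt_mul_of_pos_right h2 ha, mul_lt_mul_of_pos_left hab (by positivity : (0:ℝ) < (p*b)*(p*b))]

lemma key2 (C : ℝ) (hC : 0 < C) {a b : ℝ} (ha : 0 < a) (hab : a < b) :
    (1 - Real.exp (-(C / b))) / b < (1 - Real.exp (-(C / a))) / a := by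
  have hb : 0 < b := ha.trans hab
  have hdiv : C / b < C / a := div_lt_div_of_pos_left hC ha hab
  have hdb : 0 < C / b := div_pos hC hb
  have hexp : Real.exp (-(C / a)) < Real.exp (-(C / b)) := Real.exp_lt_exp.mpr (by linarith)
  have hlt1 : Real.exp (-(C / b)) < 1 := Real.exp_lt_one_iff.mpr (by linarith)
  set p := 1 - Real.exp (-(C / a))
  set q := 1 - Real.exp (-(C / b))
  have hq : 0 < q := by simp only [q]; linarith
  have hqp : q < p := by simp only [p, q]; linarith
  rw [div_lt_div_iff₀ hb ha]
  nlinarith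

/-- For positive constants `C₁, C₂, C₃, C₄`, the SAM mean squared displacement
`Δ_SAM(γ, B) = C₁(1 - e^{-C₂(1-γ)})²/((1-γ)³ B) + C₃(1 - e^{-C₄/(1-γ)})/((1-γ) B)` is
strictly increasing in the momentum `γ ∈ [0,1)` for each fixed batch size `B > 0`, and
strictly decreasing in `B > 0` for each fixed `γ ∈ [0,1)`. -/
theorem sam_msd_momentum_batchsize (C₁ C₂ C₃ C₄ : ℝ)
    (hC₁ : 0 < C₁) (hC₂ : 0 < C₂) (hC₃ : 0 < C₃) (hC₄ : 0 < C₄) :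
    (∀ B : ℝ, 0 < B →
      StrictMonoOn
        (fun γ : ℝ =>
          C₁ * (1 - Real.exp (-(C₂ * (1 - γ)))) ^ 2 / ((1 - γ) ^ 3 * B) +
            C₃ * (1 - Real.exp (-(C₄ / (1 - γ)))) / ((1 - γ) * B))
        (Set.Ico 0 1)) ∧
    (∀ γ : ℝ, γ ∈ Set.Ico (0 : ℝ) 1 →
      StrictAntiOn
        (fun B : ℝ =>
          C₁ * (1 - Real.exp (-(C₂ * (1 - γ)))) ^ 2 / ((1 - γ) ^ 3 * B) +
            C₃ * (1 - Real.exp (-(C₄ / (1 - γ)))) / ((1 - γ) * B))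
        (Set.Ioi 0)) := by
  constructor
  · intro B hB γ₁ hγ₁ γ₂ hγ₂ hlt
    simp only
    have ha : 0 < 1 - γ₂ := by linarith [hγ₂.2]
    have hab : 1 - γ₂ < 1 - γ₁ := by linarith
    have k1 := key1 C₂ hC₂ ha hab
    have k2 := key2 C₄ hC₄ ha hab
    have e1 : ∀ X u : ℝ, C₁ * X / (u ^ 3 * B) = (C₁ / B) * (X / u ^ 3) := by
      intros; ring
    have e2 : ∀ Y u : ℝ, C₃ * Y / (u * B) = (C₃ / B) * (Y / u) := by
      intros; ring
    rw [e1, e1, e2, e2]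
    exact add_lt_add (mul_lt_mul_of_pos_left k1 (by positivity))
      (mul_lt_mul_of_pos_left k2 (by positivity))
  · intro γ hγ B₁ hB₁ B₂ hB₂ hlt
    simp only [Set.mem_Ioi] at hB₁ hB₂
    have hu : 0 < 1 - γ := by linarith [hγ.2]
    have hX : 0 < (1 - Real.exp (-(C₂ * (1 - γ)))) ^ 2 := by
      have h1 : Real.exp (-(C₂ * (1 - γ))) < 1 :=
        Real.exp_lt_one_iff.mpr (by nlinarith)
      have : 0 < 1 - Real.exp (-(C₂ * (1 - γ))) := by linarith
      positivity
    have hY : 0 < 1 - Real.exp (-(C₄ / (1 - γ))) := by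
      have h1 : Real.exp (-(C₄ / (1 - γ))) < 1 :=
        Real.exp_lt_one_iff.mpr (by linarith [div_pos hC₄ hu])
      linarith
    set K := C₁ * (1 - Real.exp (-(C₂ * (1 - γ)))) ^ 2 / (1 - γ) ^ 3 +
      C₃ * (1 - Real.exp (-(C₄ / (1 - γ)))) / (1 - γ) with hK
    have hKpos : 0 < K := by
      apply add_pos
      · exact div_pos (mul_pos hC₁ hX) (by positivity)
      · exact div_pos (mul_pos hC₃ hY) hu
    have eB : ∀ b : ℝ, b ≠ 0 →
        C₁ * (1 - Real.exp (-(C₂ * (1 - γ)))) ^ 2 / ((1 - γ) ^ 3 * b) +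
          C₃ * (1 - Real.exp (-(C₄ / (1 - γ)))) / ((1 - γ) * b) = K / b := by
      intro b hb
      rw [hK]
      field_simp
    simp only
    rw [eB B₁ (ne_of_gt hB₁), eB B₂ (ne_of_gt hB₂)]
    exact div_lt_div_of_pos_left hKpos hB₁ hlt
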